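/- Let (X,ρ) be a metric space, let f : [0,∞) → [0,∞) be an unbounded modulus and let (A_k) be a sequence in CL(X). If A, B ∈ CL(X) satisfy [WS^f]-lim A_k = A and [WS^f]-lim A_k = B, then A = B; i.e., the f-Wijsman statistical limit is unique when it exists. -/

import Mathlib

open Filter Metric Set
open scoped Classical

/-- A modulus: `f : [0,∞) → [0,∞)` with `f x = 0 ↔ x = 0`, subadditive,
increasing, and continuous (all on `[0,∞)`). -/
def IsModulus (f : ℝ → ℝ) : Prop :=
  (∀ x : ℝ, 0 ≤ x → 0 ≤ f x) ∧
  (∀ x : ℝ, 0 ≤ x → (f x = 0 ↔ x = 0)) ∧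
  (∀ x y : ℝ, 0 ≤ x → 0 ≤ y → f (x + y) ≤ f x + f y) ∧
  MonotoneOn f (Set.Ici 0) ∧
  ContinuousOn f (Set.Ici 0)

/-- `f` is unbounded on `[0,∞)`. -/
def IsUnboundedOn (f : ℝ → ℝ) : Prop := ∀ M : ℝ, ∃ x : ℝ, 0 ≤ x ∧ M < f x

/-- The number of elements `k ≤ n` with `k ∈ K`. -/
noncomputable def countLe (K : Set ℕ) (n : ℕ) : ℕ := Nat.card {k : ℕ | k ≤ n ∧ k ∈ K}

/-- `K ⊆ ℕ` has `f`-density `d`: `lim_n f(|{k ≤ n : k ∈ K}|)/f(n) = d`. -/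
def HasFDensity (f : ℝ → ℝ) (K : Set ℕ) (d : ℝ) : Prop :=
  Tendsto (fun n : ℕ => f (countLe K n : ℝ) / f (n : ℝ)) atTop (nhds d)

/-- `K ⊆ ℕ` has natural density `d`: `lim_n |{k ≤ n : k ∈ K}|/n = d`. -/
def HasNatDensity (K : Set ℕ) (d : ℝ) : Prop :=
  Tendsto (fun n : ℕ => (countLe K n : ℝ) / (n : ℝ)) atTop (nhds d)

/-- Wijsman convergence: `d(x, A_k) → d(x, A)` for every `x`. -/
def WijsmanConvTo {X : Type*} [MetricSpace X] (Aseq : ℕ → Set X) (A : Set X) : Prop :=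
  ∀ x : X, Tendsto (fun k : ℕ => infDist x (Aseq k)) atTop (nhds (infDist x A))

/-- Wijsman statistical convergence (with respect to the natural density). -/
def WijsmanStatConvTo {X : Type*} [MetricSpace X] (Aseq : ℕ → Set X) (A : Set X) : Prop :=
  ∀ x : X, ∀ ε : ℝ, 0 < ε →
    HasNatDensity {k : ℕ | ε ≤ |infDist x (Aseq k) - infDist x A|} 0

/-- `f`-Wijsman statistical convergence: `[WS^f]-lim A_k = A`. -/
def FWijsmanStatConvTo (f : ℝ → ℝ) {X : Type*} [MetricSpace X]
    (Aseq : ℕ → Set X) (A : Set X) : Prop :=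
  ∀ x : X, ∀ ε : ℝ, 0 < ε →
    HasFDensity f {k : ℕ | ε ≤ |infDist x (Aseq k) - infDist x A|} 0

/-- Wijsman boundedness: `sup_k d(x, A_k) < ∞` for every `x`. -/
def WijsmanBounded {X : Type*} [MetricSpace X] (Aseq : ℕ → Set X) : Prop :=
  ∀ x : X, ∃ M : ℝ, ∀ k : ℕ, infDist x (Aseq k) ≤ M

/-- Wijsman Cesàro summability to `A`. -/
def WijsmanCesaroTo {X : Type*} [MetricSpace X] (Aseq : ℕ → Set X) (A : Set X) : Prop :=
  ∀ x : X, Tendsto (fun n : ℕ => (∑ k ∈ Finset.range n, infDist x (Aseq k)) / (n : ℝ))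
    atTop (nhds (infDist x A))

/-- Wijsman strong Cesàro summability to `A` with respect to a modulus `f`:
`[Ww^f]-lim A_k = A`. -/
def WijsmanStrongCesaroTo (f : ℝ → ℝ) {X : Type*} [MetricSpace X]
    (Aseq : ℕ → Set X) (A : Set X) : Prop :=
  ∀ x : X, Tendsto
    (fun n : ℕ => (∑ k ∈ Finset.range n, f |infDist x (Aseq k) - infDist x A|) / (n : ℝ))
    atTop (nhds 0)

/-- A slowly varying modulus: `lim_{x→∞} f(ax)/f(x) = 1` for every `a > 0`. -/
def SlowlyVaryingOn (f : ℝ → ℝ) : Prop :=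
  ∀ a : ℝ, 0 < a → Tendsto (fun x : ℝ => f (a * x) / f x) atTop (nhds 1)

lemma countLe_add_ge (K L : Set ℕ) (hKL : ∀ k, k ∈ K ∨ k ∈ L) (n : ℕ) :
    n + 1 ≤ countLe K n + countLe L n := by
  have hfin : (Set.Iic n).Finite := Set.finite_Iic n
  have h1 : countLe K n = ({k : ℕ | k ≤ n ∧ k ∈ K} : Set ℕ).ncard :=
    (Nat.card_coe_set_eq _)
  have h2 : countLe L n = ({k : ℕ | k ≤ n ∧ k ∈ L} : Set ℕ).ncard :=
    (Nat.card_coe_set_eq _)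
  have hsub : Set.Iic n ⊆ {k : ℕ | k ≤ n ∧ k ∈ K} ∪ {k : ℕ | k ≤ n ∧ k ∈ L} := by
    intro k hk
    rcases hKL k with h | h
    · exact Or.inl ⟨hk, h⟩
    · exact Or.inr ⟨hk, h⟩
  have hKfin : ({k : ℕ | k ≤ n ∧ k ∈ K} : Set ℕ).Finite :=
    hfin.subset (fun k hk => hk.1)
  have hLfin : ({k : ℕ | k ≤ n ∧ k ∈ L} : Set ℕ).Finite :=
    hfin.subset (fun k hk => hk.1)
  calc n + 1 = (Set.Iic n).ncard := by
        rw [Set.ncard_eq_toFinset_card', Set.toFinset_Iic, Nat.card_Iic]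
    _ ≤ ({k : ℕ | k ≤ n ∧ k ∈ K} ∪ {k : ℕ | k ≤ n ∧ k ∈ L} : Set ℕ).ncard :=
        Set.ncard_le_ncard hsub (hKfin.union hLfin)
    _ ≤ ({k : ℕ | k ≤ n ∧ k ∈ K} : Set ℕ).ncard
          + ({k : ℕ | k ≤ n ∧ k ∈ L} : Set ℕ).ncard := Set.ncard_union_le _ _
    _ = countLe K n + countLe L n := by rw [h1, h2]

lemma key_contradiction (f : ℝ → ℝ) (hf : IsModulus f)
    (K L : Set ℕ) (hKL : ∀ k, k ∈ K ∨ k ∈ L)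
    (hK : HasFDensity f K 0) (hL : HasFDensity f L 0) : False := by
  obtain ⟨hf0, hfzero, hfsub, hfmono, _⟩ := hf
  have hf1 : 0 < f 1 := by
    rcases lt_or_eq_of_le (hf0 1 zero_le_one) with h | h
    · exact h
    · exact absurd ((hfzero 1 zero_le_one).mp h.symm) one_ne_zero
  have hfn : ∀ n : ℕ, 1 ≤ n → 0 < f (n : ℝ) := fun n hn =>
    lt_of_lt_of_le hf1 (hfmono (Set.mem_Ici.mpr zero_le_one) (Set.mem_Ici.mpr (by positivity))
      (by exact_mod_cast hn))
  -- 1 ≤ f(countLe K n)/f n + f(countLe L n)/f n for n ≥ 1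
  have hge : ∀ n : ℕ, 1 ≤ n →
      (1 : ℝ) ≤ f (countLe K n : ℝ) / f (n : ℝ) + f (countLe L n : ℝ) / f (n : ℝ) := by
    intro n hn
    have hpos := hfn n hn
    rw [← add_div, le_div_iff₀ hpos, one_mul]
    have hcount := countLe_add_ge K L hKL n
    have h1 : f (n : ℝ) ≤ f ((countLe K n : ℝ) + (countLe L n : ℝ)) := by
      apply hfmono (Set.mem_Ici.mpr (by positivity)) (Set.mem_Ici.mpr (by positivity))
      have : (n : ℝ) ≤ ((countLe K n + countLe L n : ℕ) : ℝ) := by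
        exact_mod_cast le_trans (Nat.le_succ n) hcount
      simpa [Nat.cast_add] using this
    exact h1.trans (hfsub _ _ (by positivity) (by positivity))
  have hsum : Tendsto (fun n : ℕ =>
      f (countLe K n : ℝ) / f (n : ℝ) + f (countLe L n : ℝ) / f (n : ℝ))
      atTop (nhds 0) := by simpa using hK.add hL
  have : (1 : ℝ) ≤ 0 :=
    ge_of_tendsto hsum (Filter.eventually_atTop.2 ⟨1, fun n hn => hge n hn⟩)
  linarith

/-- The `f`-Wijsman statistical limit is unique when it exists. -/
theorem stmt2 {X : Type*} [MetricSpace X] (f : ℝ → ℝ)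
    (hf : IsModulus f) (hfu : IsUnboundedOn f)
    (A B : Set X) (hA : A.Nonempty) (hAcl : IsClosed A)
    (hB : B.Nonempty) (hBcl : IsClosed B)
    (Aseq : ℕ → Set X) (hAseq : ∀ k, (Aseq k).Nonempty ∧ IsClosed (Aseq k))
    (hfA : FWijsmanStatConvTo f Aseq A) (hfB : FWijsmanStatConvTo f Aseq B) :
    A = B := by
  by_contra hne
  -- get a point where the distances differ
  have hx : ∃ x : X, infDist x A ≠ infDist x B := by
    have : ¬ (A ⊆ B ∧ B ⊆ A) := fun ⟨h1, h2⟩ => hne (Set.Subset.antisymm h1 h2)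
    rcases not_and_or.mp this with h | h
    · rcases Set.not_subset.mp h with ⟨x, hxA, hxB⟩
      refine ⟨x, ?_⟩
      rw [infDist_zero_of_mem hxA]
      intro h0
      exact hxB ((hBcl.mem_iff_infDist_zero hB).mpr h0.symm)
    · rcases Set.not_subset.mp h with ⟨x, hxB, hxA⟩
      refine ⟨x, ?_⟩
      rw [infDist_zero_of_mem hxB]
      intro h0
      exact hxA ((hAcl.mem_iff_infDist_zero hA).mpr h0)
  obtain ⟨x, hxne⟩ := hx
  set ε : ℝ := |infDist x A - infDist x B| / 2 with hε
  have hεpos : 0 < ε := by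
    have : infDist x A - infDist x B ≠ 0 := sub_ne_zero.mpr hxne
    positivity
  have hKA := hfA x ε hεpos
  have hKB := hfB x ε hεpos
  refine key_contradiction f hf _ _ ?_ hKA hKB
  intro k
  by_contra hcon
  push_neg at hcon
  obtain ⟨h1, h2⟩ := hcon
  simp only [Set.mem_setOf_eq, not_le] at h1 h2
  have : |infDist x A - infDist x B| < 2 * ε := by
    calc |infDist x A - infDist x B|
        ≤ |infDist x (Aseq k) - infDist x A| + |infDist x (Aseq k) - infDist x B| := by
          have h := abs_sub_le (infDist x A) (infDist x (Aseq k)) (infDist x B)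
          rwa [abs_sub_comm (infDist x A) (infDist x (Aseq k))] at h
      _ < ε + ε := add_lt_add h1 h2
      _ = 2 * ε := by ring
  rw [hε] at this
  linarith [this]
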